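/- For every z ∈ M, the identity S^R_{z^2,2}(x) = x · (S^R_{z,1}(x) ∗ S^R_{z,1}(−x)) holds in 𝔥_{M,∗}⟦x⟧. -/

import Mathlib

open scoped BigOperators

/-- `𝔥_M`: the noncommutative polynomial ring `ℚ⟨e_z : z ∈ M⟩`, realized as the
monoid algebra of the free monoid on `M` over `ℚ` (concatenation product). -/
abbrev H (M : Type*) [MonoidWithZero M] : Type _ := MonoidAlgebra ℚ (FreeMonoid M)

variable {M : Type*} [MonoidWithZero M]

/-- The word `e_{a_1} ⋯ e_{a_k}` as an element of `𝔥_M`. -/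
noncomputable def wrd (l : List M) : H M := MonoidAlgebra.single (FreeMonoid.ofList l) 1

/-- The generator `e_z`. -/
noncomputable def e (z : M) : H M := wrd [z]

/-- The harmonic product on words, defined by the recursion
`e_a w ∗ e_b w' = e_{ab}(w ∗ e_b w' + e_a w ∗ w' − e_0 (w ∗ w'))`. -/
noncomputable def har : List M → List M → H M
  | [], w => wrd w
  | a :: w, [] => wrd (a :: w)
  | a :: w, b :: w' =>
      wrd [a * b] * (har w (b :: w') + har (a :: w) w' - wrd [0] * har w w')
termination_by w w' => w.length + w'.length
decreasing_by all_goals (simp; try omega)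

/-- The harmonic product `∗` on `𝔥_M`, extended ℚ-bilinearly from words. -/
noncomputable def hmul (f g : H M) : H M :=
  Finsupp.sum f.coeff fun w a => Finsupp.sum g.coeff fun w' b =>
    (a * b) • har (FreeMonoid.toList w) (FreeMonoid.toList w')

/-- Powers with respect to the harmonic product. -/
noncomputable def hpow (a : H M) : ℕ → H M
  | 0 => 1
  | n + 1 => hmul a (hpow a n)

/-- `s_{z,k} = e_z e_0^{k-1}` (concatenation product). -/
noncomputable def s (z : M) (k : ℕ) : H M := e z * (e 0) ^ (k - 1)

/-- `sprod z k n = s_{z^n,k} s_{z^{n-1},k} ⋯ s_{z,k}` (concatenation), `sprod z k 0 = 1`. -/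
noncomputable def sprod (z : M) (k : ℕ) : ℕ → H M
  | 0 => 1
  | n + 1 => s (z ^ (n + 1)) k * sprod z k n

/-- Cauchy product of power series over `(𝔥_M, ∗)`, represented as coefficient sequences. -/
noncomputable def hmulPS (f g : ℕ → H M) : ℕ → H M :=
  fun n => ∑ i ∈ Finset.range (n + 1), hmul (f i) (g (n - i))

/-- Powers of a power series w.r.t. the harmonic product. -/
noncomputable def psPow (f : ℕ → H M) : ℕ → (ℕ → H M)
  | 0 => fun n => if n = 0 then 1 else 0
  | m + 1 => hmulPS f (psPow f m)

/-- `exp_∗` of a power series with zero constant term (coefficientwise). -/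
noncomputable def expPS (f : ℕ → H M) : ℕ → H M :=
  fun n => ∑ m ∈ Finset.range (n + 1), ((Nat.factorial m : ℚ))⁻¹ • psPow f m n

/-- Coefficients of the formal sine `S_z(x) = Σ_{n≥0} s_{z^n,2}⋯s_{z,2} x^{2n+1}`. -/
noncomputable def Scoef (z : M) (d : ℕ) : H M :=
  if d % 2 = 1 then sprod z 2 (d / 2) else 0

/-- Coefficients of the formal cosine `C_z(x) = S_z'(x)`. -/
noncomputable def Ccoef (z : M) (d : ℕ) : H M := ((d : ℚ) + 1) • Scoef z (d + 1)

/-- `w_{z,n} = (2n+1)! s_{z^n,2} ⋯ s_{z,2}`. -/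
noncomputable def wz (z : M) (n : ℕ) : H M := ((Nat.factorial (2 * n + 1) : ℚ)) • sprod z 2 n

/-- `g_{z,m,n} = w_{z,m+n} − w_{z,m} ∗ w_{z,n}`. -/
noncomputable def gz (z : M) (m n : ℕ) : H M := wz z (m + n) - hmul (wz z m) (wz z n)

/-- Coefficient of `x^i y^j` in `A_z(x,y) = S_z(x+y) − S_z(x) ∗ C_z(y) − C_z(x) ∗ S_z(y)`. -/
noncomputable def Acoef (z : M) (i j : ℕ) : H M :=
  (Nat.choose (i + j) i : ℚ) • Scoef z (i + j)
    - hmul (Scoef z i) (Ccoef z j) - hmul (Ccoef z i) (Scoef z j)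

/-- Coefficient of `x^d` in `P_z(x) = −w_{z,1} ∗ S_z(x)^{∗2} + C_z(x)^{∗2}`. -/
noncomputable def Pcoef (z : M) (d : ℕ) : H M :=
  -(hmul (wz z 1) (hmulPS (Scoef z) (Scoef z) d)) + hmulPS (Ccoef z) (Ccoef z) d


/-- Coefficients of `S^T_{z,k}(x) = Σ_{n≥0} s_{z^n,k}⋯s_{z,k} x^{(n+1)k−1}`. -/
noncomputable def STcoef (z : M) (k : ℕ) (d : ℕ) : H M :=
  if k ∣ (d + 1) then sprod z k ((d + 1) / k - 1) else 0

/-- Coefficients of the series `Σ_{n≥1} (s_{z^n,nk}/n) x^{nk}`. -/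
noncomputable def gexp (z : M) (k : ℕ) (d : ℕ) : H M :=
  if d ≠ 0 ∧ k ∣ d then (((d / k : ℕ) : ℚ))⁻¹ • s (z ^ (d / k)) d else 0

/-- Coefficients of `S^R_{z,k}(x) = x^{k−1} exp_∗(Σ_{n≥1} (s_{z^n,nk}/n) x^{nk})`. -/
noncomputable def SRcoef (z : M) (k : ℕ) (d : ℕ) : H M :=
  if k - 1 ≤ d then expPS (gexp z k) (d - (k - 1)) else 0

/-- Admissible words spanning `𝔥^0_M = ℚ ⊕ ⨁_{a≠0,1} 𝔥_M e_a ⊕ ⨁_{a≠0,b≠1} e_a 𝔥_M e_b`. -/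
def adm0 (l : List M) : Prop :=
  l = [] ∨ ∃ h : l ≠ [],
    (l.getLast h ≠ 0 ∧ l.getLast h ≠ 1) ∨ (l.head h ≠ 0 ∧ l.getLast h ≠ 1)

/-- The subspace `𝔥^0_M`. -/
noncomputable def H0 (M : Type*) [MonoidWithZero M] : Submodule ℚ (H M) :=
  Submodule.span ℚ {x | ∃ l : List M, adm0 l ∧ x = wrd l}

/-- Words spanning `𝔥^1_M = ⨁_{m≥0} 𝔥^0_M e_1^m`. -/
def adm1 (l : List M) : Prop :=
  ∃ (l₀ : List M) (m : ℕ), adm0 l₀ ∧ l = l₀ ++ List.replicate m 1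

/-- The subspace `𝔥^1_M`. -/
noncomputable def H1 (M : Type*) [MonoidWithZero M] : Submodule ℚ (H M) :=
  Submodule.span ℚ {x | ∃ l : List M, adm1 l ∧ x = wrd l}

/-- `ℓ(w)`: the number of letters `e_a` of a word with `a ≠ 0`. -/
noncomputable def lcount (l : List M) : ℕ :=
  l.countP fun a => @decide (a ≠ 0) (Classical.propDecidable _)

/-- `ℱ_d 𝔥^0_M`: span of admissible words `w` with `ℓ(w) ≤ d`. -/
noncomputable def F0 (M : Type*) [MonoidWithZero M] (d : ℕ) : Submodule ℚ (H M) :=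
  Submodule.span ℚ {x | ∃ l : List M, adm0 l ∧ lcount l ≤ d ∧ x = wrd l}

/-- The ideal of `(𝔥_M, ∗)` generated by a set. -/
noncomputable def genIdeal (S : Set (H M)) : Submodule ℚ (H M) :=
  Submodule.span ℚ {x | ∃ a y, y ∈ S ∧ x = hmul a y}

/-- The product on the polynomial ring `𝔥_{M,∗}[S,T]` (represented as
finitely supported coefficient families indexed by monomials `S^i T^j`). -/
noncomputable def polyMul2 (f g : (ℕ × ℕ) →₀ H M) : (ℕ × ℕ) →₀ H M :=
  Finsupp.sum f fun p a => Finsupp.sum g fun q b => Finsupp.single (p + q) (hmul a b)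

/-- `φ : 𝔥^0_{M,∗}[S,T] → 𝔥_{M,∗}`, `Σ w_{ij} S^i T^j ↦ Σ w_{ij} ∗ e_0^{∗i} ∗ e_1^{∗j}`. -/
noncomputable def phi2 (f : (ℕ × ℕ) →₀ H M) : H M :=
  Finsupp.sum f fun p a => hmul a (hmul (hpow (e 0) p.1) (hpow (e 1) p.2))

/-- The product on `𝔥_{M,∗}[S]`. -/
noncomputable def polyMul1 (f g : ℕ →₀ H M) : ℕ →₀ H M :=
  Finsupp.sum f fun p a => Finsupp.sum g fun q b => Finsupp.single (p + q) (hmul a b)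

/-- `φ₁ : 𝔥^1_{M,∗}[S] → 𝔥_{M,∗}`, `Σ w_i S^i ↦ Σ w_i ∗ e_0^{∗i}`. -/
noncomputable def phi1 (f : ℕ →₀ H M) : H M :=
  Finsupp.sum f fun i a => hmul a (hpow (e 0) i)



/-! ### Auxiliary lemmas -/

section Aux

open Finsupp

lemma wrd_nil : (wrd ([] : List M)) = 1 := rfl

lemma wrd_cons (a : M) (l : List M) : wrd (a :: l) = wrd [a] * wrd l := by
  classical
  simp only [wrd, MonoidAlgebra.single_mul_single, one_mul]
  rfl

lemma wrd_mul_single (x : M) (w : FreeMonoid M) (c : ℚ) :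
    wrd [x] * MonoidAlgebra.single w c
      = MonoidAlgebra.single (FreeMonoid.ofList (x :: FreeMonoid.toList w)) c := by
  classical
  simp only [wrd, MonoidAlgebra.single_mul_single, one_mul]
  congr 1

lemma single_eq_smul_wrd (w : FreeMonoid M) (c : ℚ) :
    (MonoidAlgebra.single w c : H M) = c • wrd (FreeMonoid.toList w) := by
  simp [wrd, Finsupp.smul_single, MonoidAlgebra.smul_single]

lemma hmul_zero_left (g : H M) : hmul (0 : H M) g = 0 := by
  simp [hmul]

lemma hmul_zero_right (f : H M) : hmul f (0 : H M) = 0 := by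
  simp [hmul]

lemma hmul_add_left (f₁ f₂ g : H M) : hmul (f₁ + f₂) g = hmul f₁ g + hmul f₂ g := by
  classical
  unfold hmul
  rw [MonoidAlgebra.coeff_add, Finsupp.sum_add_index']
  · intro w; simp
  · intro w a₁ a₂
    rw [← Finsupp.sum_add]
    congr 1; ext w' b
    rw [add_mul, add_smul]

lemma hmul_add_right (f g₁ g₂ : H M) : hmul f (g₁ + g₂) = hmul f g₁ + hmul f g₂ := by
  classical
  unfold hmul
  rw [← Finsupp.sum_add]
  congr 1; ext w a
  rw [MonoidAlgebra.coeff_add, Finsupp.sum_add_index']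
  · intro w'; simp
  · intro w' b₁ b₂
    rw [mul_add, add_smul]

lemma hmul_smul_left (c : ℚ) (f g : H M) : hmul (c • f) g = c • hmul f g := by
  classical
  unfold hmul
  rw [MonoidAlgebra.coeff_smul, Finsupp.sum_smul_index', Finsupp.smul_sum]
  · apply Finsupp.sum_congr
    intro w _
    rw [Finsupp.smul_sum]
    apply Finsupp.sum_congr
    intro w' _
    rw [smul_smul]
    congr 1
    simp only [smul_eq_mul]
    ring
  · intro w; simp

lemma hmul_smul_right (c : ℚ) (f g : H M) : hmul f (c • g) = c • hmul f g := by
  classical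
  unfold hmul
  rw [Finsupp.smul_sum]
  apply Finsupp.sum_congr
  intro w _
  rw [MonoidAlgebra.coeff_smul, Finsupp.sum_smul_index', Finsupp.smul_sum]
  · apply Finsupp.sum_congr
    intro w' _
    rw [smul_smul]
    congr 1
    simp only [smul_eq_mul]
    ring
  · intro w'; simp

lemma hmul_neg_left (f g : H M) : hmul (-f) g = - hmul f g := by
  have := hmul_smul_left (-1 : ℚ) f g
  simpa using this

lemma hmul_neg_right (f g : H M) : hmul f (-g) = - hmul f g := by
  have := hmul_smul_right (-1 : ℚ) f g
  simpa using this

lemma hmul_sub_left (f₁ f₂ g : H M) : hmul (f₁ - f₂) g = hmul f₁ g - hmul f₂ g := by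
  rw [sub_eq_add_neg, hmul_add_left, hmul_neg_left, sub_eq_add_neg]

lemma hmul_sub_right (f g₁ g₂ : H M) : hmul f (g₁ - g₂) = hmul f g₁ - hmul f g₂ := by
  rw [sub_eq_add_neg, hmul_add_right, hmul_neg_right, sub_eq_add_neg]

lemma hmul_wrd (u v : List M) : hmul (wrd u) (wrd v) = har u v := by
  classical
  unfold hmul wrd
  simp only [MonoidAlgebra.coeff_single]
  rw [Finsupp.sum_single_index, Finsupp.sum_single_index]
  · simp [FreeMonoid.toList_ofList]
  · simp
  · simp

end Aux


section Aux2

lemma H_induction_linear {P : H M → Prop} (f : H M) (h0 : P 0)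
    (hadd : ∀ f g : H M, P f → P g → P (f + g))
    (hsingle : ∀ (w : FreeMonoid M) (c : ℚ), P (MonoidAlgebra.single w c)) : P f :=
  MonoidAlgebra.induction_linear (motive := P) f h0 (fun a b ha hb => hadd a b ha hb) hsingle

lemma har_nil_left (v : List M) : har ([] : List M) v = wrd v := by rw [har]

lemma har_nil_right (u : List M) : har u ([] : List M) = wrd u := by
  cases u with
  | nil => rw [har]
  | cons a w => rw [har]

lemma har_cons_cons (a b : M) (u v : List M) :
    har (a :: u) (b :: v)
      = wrd [a * b] * (har u (b :: v) + har (a :: u) v - wrd [0] * har u v) := by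
  rw [har]

lemma hmul_one (f : H M) : hmul f 1 = f := by
  classical
  conv_lhs => rw [hmul]
  have key : ∀ (w : FreeMonoid M) (a : ℚ),
      (Finsupp.sum (1 : H M).coeff fun w' b =>
        (a * b) • har (FreeMonoid.toList w) (FreeMonoid.toList w')) =
      MonoidAlgebra.single w a := by
    intro w a
    show Finsupp.sum (MonoidAlgebra.single (1 : FreeMonoid M) (1 : ℚ)).coeff _ = _
    rw [MonoidAlgebra.coeff_single, Finsupp.sum_single_index (by simp)]
    show (a * 1) • har (FreeMonoid.toList w) ([] : List M) = _
    rw [mul_one, har_nil_right, ← single_eq_smul_wrd]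
  rw [Finsupp.sum_congr (fun w _ => key w (f.coeff w))]
  exact MonoidAlgebra.sum_coeff_single f

lemma one_hmul (f : H M) : hmul 1 f = f := by
  classical
  conv_lhs => rw [hmul]
  show Finsupp.sum (MonoidAlgebra.single (1 : FreeMonoid M) (1 : ℚ)).coeff _ = _
  rw [MonoidAlgebra.coeff_single, Finsupp.sum_single_index (by simp)]
  have key : ∀ (w' : FreeMonoid M) (b : ℚ),
      ((1 : ℚ) * b) • har ([] : List M) (FreeMonoid.toList w') =
        MonoidAlgebra.single w' b := by
    intro w' b
    rw [one_mul, har_nil_left, ← single_eq_smul_wrd]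
  rw [Finsupp.sum_congr (fun w' _ => key w' (f.coeff w'))]
  exact MonoidAlgebra.sum_coeff_single f

lemma hmul_cons (x y : M) (p q : H M) :
    hmul (wrd [x] * p) (wrd [y] * q) =
      wrd [x * y] * (hmul p (wrd [y] * q) + hmul (wrd [x] * p) q - wrd [0] * hmul p q) := by
  induction p using H_induction_linear with
  | h0 => simp [hmul_zero_left, hmul_zero_right]
  | hadd p₁ p₂ h₁ h₂ =>
      simp only [mul_add, hmul_add_left] at h₁ h₂ ⊢
      rw [h₁, h₂]
      simp only [mul_add, mul_sub]
      abel
  | hsingle w c =>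
      induction q using H_induction_linear with
      | h0 => simp [hmul_zero_left, hmul_zero_right]
      | hadd q₁ q₂ h₁ h₂ =>
          simp only [mul_add, hmul_add_right] at h₁ h₂ ⊢
          rw [h₁, h₂]
          simp only [mul_add, mul_sub]
          abel
      | hsingle w' c' =>
          rw [wrd_mul_single, wrd_mul_single]
          rw [single_eq_smul_wrd (FreeMonoid.ofList (x :: FreeMonoid.toList w)),
            single_eq_smul_wrd (FreeMonoid.ofList (y :: FreeMonoid.toList w')),
            single_eq_smul_wrd w, single_eq_smul_wrd w']
          simp only [FreeMonoid.toList_ofList]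
          simp only [hmul_smul_left, hmul_smul_right, hmul_wrd]
          rw [har_cons_cons]
          simp only [smul_add, smul_sub, ← mul_smul_comm]

end Aux2

section Aux2a

lemma har_zero_cons (u v : List M) : har ((0 : M) :: u) v = wrd [0] * har u v := by
  induction v with
  | nil => rw [har_nil_right, har_nil_right, wrd_cons]
  | cons b v ih =>
      rw [har_cons_cons, ih, zero_mul, add_sub_cancel_right]

lemma har_cons_zero (u v : List M) : har u ((0 : M) :: v) = wrd [0] * har u v := by
  induction u with
  | nil => rw [har_nil_left, har_nil_left, wrd_cons]
  | cons a u ih =>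
      rw [har_cons_cons, ih, mul_zero, add_sub_cancel_left]

end Aux2a

section Aux2b

lemma hmul_wrd0_left (p q : H M) : hmul (wrd [0] * p) q = wrd [0] * hmul p q := by
  induction p using H_induction_linear with
  | h0 => simp [hmul_zero_left]
  | hadd p₁ p₂ h₁ h₂ => simp only [mul_add, hmul_add_left, h₁, h₂]
  | hsingle w c =>
      induction q using H_induction_linear with
      | h0 => simp [hmul_zero_right]
      | hadd q₁ q₂ h₁ h₂ => simp only [mul_add, hmul_add_right, h₁, h₂]
      | hsingle w' c' =>
          rw [wrd_mul_single]
          rw [single_eq_smul_wrd (FreeMonoid.ofList ((0 : M) :: FreeMonoid.toList w)),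
            single_eq_smul_wrd w, single_eq_smul_wrd w']
          simp only [FreeMonoid.toList_ofList]
          simp only [hmul_smul_left, hmul_smul_right, hmul_wrd]
          rw [har_zero_cons]
          simp only [mul_smul_comm]

lemma hmul_wrd0_right (p q : H M) : hmul p (wrd [0] * q) = wrd [0] * hmul p q := by
  induction p using H_induction_linear with
  | h0 => simp [hmul_zero_left]
  | hadd p₁ p₂ h₁ h₂ => simp only [mul_add, hmul_add_left, h₁, h₂]
  | hsingle w c =>
      induction q using H_induction_linear with
      | h0 => simp [hmul_zero_right]
      | hadd q₁ q₂ h₁ h₂ => simp only [mul_add, hmul_add_right, h₁, h₂]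
      | hsingle w' c' =>
          rw [wrd_mul_single]
          rw [single_eq_smul_wrd (FreeMonoid.ofList ((0 : M) :: FreeMonoid.toList w')),
            single_eq_smul_wrd w, single_eq_smul_wrd w']
          simp only [FreeMonoid.toList_ofList]
          simp only [hmul_smul_left, hmul_smul_right, hmul_wrd]
          rw [har_cons_zero]
          simp only [mul_smul_comm]

end Aux2b


section Assoc

lemma hmul_wrd_assoc_aux :
    ∀ (n : ℕ) (u v w : List M), u.length + v.length + w.length ≤ n →
      hmul (hmul (wrd u) (wrd v)) (wrd w) = hmul (wrd u) (hmul (wrd v) (wrd w)) := by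
  intro n
  induction n with
  | zero =>
      intro u v w h
      have hu : u = [] := by cases u <;> simp_all
      subst hu
      rw [wrd_nil, one_hmul, one_hmul]
  | succ n ih =>
      intro u v w h
      match u, v, w with
      | [], v, w => rw [wrd_nil, one_hmul, one_hmul]
      | u, [], w => rw [wrd_nil, hmul_one, one_hmul]
      | u, v, [] => rw [wrd_nil, hmul_one, hmul_one]
      | a :: u, b :: v, c :: w =>
        simp only [List.length_cons] at h
        set P : H M := hmul (wrd u) (wrd (b :: v)) + hmul (wrd (a :: u)) (wrd v)
            - wrd [0] * hmul (wrd u) (wrd v) with hP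
        have e1 : hmul (wrd (a :: u)) (wrd (b :: v)) = wrd [a * b] * P := by
          rw [hP, wrd_cons a u, wrd_cons b v, hmul_cons, ← wrd_cons a u, ← wrd_cons b v]
        have e2 : hmul (hmul (wrd (a :: u)) (wrd (b :: v))) (wrd (c :: w))
            = wrd [(a * b) * c] * (hmul P (wrd (c :: w))
                + hmul (hmul (wrd (a :: u)) (wrd (b :: v))) (wrd w)
                - wrd [0] * hmul P (wrd w)) := by
          conv_lhs => rw [e1, wrd_cons c w, hmul_cons, ← wrd_cons c w, ← e1]
        set Q : H M := hmul (wrd v) (wrd (c :: w)) + hmul (wrd (b :: v)) (wrd w)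
            - wrd [0] * hmul (wrd v) (wrd w) with hQ
        have f1 : hmul (wrd (b :: v)) (wrd (c :: w)) = wrd [b * c] * Q := by
          rw [hQ, wrd_cons b v, wrd_cons c w, hmul_cons, ← wrd_cons b v, ← wrd_cons c w]
        have f2 : hmul (wrd (a :: u)) (hmul (wrd (b :: v)) (wrd (c :: w)))
            = wrd [a * (b * c)] * (hmul (wrd u) (hmul (wrd (b :: v)) (wrd (c :: w)))
                + hmul (wrd (a :: u)) Q - wrd [0] * hmul (wrd u) Q) := by
          conv_lhs => rw [f1, wrd_cons a u, hmul_cons, ← wrd_cons a u, ← f1]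
        have hPw : hmul P (wrd (c :: w))
            = hmul (wrd u) (hmul (wrd (b :: v)) (wrd (c :: w)))
              + hmul (wrd (a :: u)) (hmul (wrd v) (wrd (c :: w)))
              - wrd [0] * hmul (wrd u) (hmul (wrd v) (wrd (c :: w))) := by
          rw [hP, hmul_sub_left, hmul_add_left, hmul_wrd0_left]
          rw [ih u (b :: v) (c :: w) (by simp; omega),
            ih (a :: u) v (c :: w) (by simp; omega),
            ih u v (c :: w) (by simp; omega)]
        have hPw' : hmul P (wrd w)
            = hmul (wrd u) (hmul (wrd (b :: v)) (wrd w))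
              + hmul (wrd (a :: u)) (hmul (wrd v) (wrd w))
              - wrd [0] * hmul (wrd u) (hmul (wrd v) (wrd w)) := by
          rw [hP, hmul_sub_left, hmul_add_left, hmul_wrd0_left]
          rw [ih u (b :: v) w (by simp; omega),
            ih (a :: u) v w (by simp; omega),
            ih u v w (by omega)]
        have hUVw : hmul (hmul (wrd (a :: u)) (wrd (b :: v))) (wrd w)
            = hmul (wrd (a :: u)) (hmul (wrd (b :: v)) (wrd w)) :=
          ih (a :: u) (b :: v) w (by simp; omega)
        have hUQ : hmul (wrd (a :: u)) Q
            = hmul (wrd (a :: u)) (hmul (wrd v) (wrd (c :: w)))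
              + hmul (wrd (a :: u)) (hmul (wrd (b :: v)) (wrd w))
              - wrd [0] * hmul (wrd (a :: u)) (hmul (wrd v) (wrd w)) := by
          rw [hQ, hmul_sub_right, hmul_add_right, hmul_wrd0_right]
        have hU'Q : hmul (wrd u) Q
            = hmul (wrd u) (hmul (wrd v) (wrd (c :: w)))
              + hmul (wrd u) (hmul (wrd (b :: v)) (wrd w))
              - wrd [0] * hmul (wrd u) (hmul (wrd v) (wrd w)) := by
          rw [hQ, hmul_sub_right, hmul_add_right, hmul_wrd0_right]
        rw [e2, f2, hPw, hPw', hUVw, hUQ, hU'Q, mul_assoc a b c]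
        simp only [mul_add, mul_sub]
        abel

lemma hmul_assoc (f g h : H M) : hmul (hmul f g) h = hmul f (hmul g h) := by
  induction f using H_induction_linear with
  | h0 => simp [hmul_zero_left]
  | hadd f₁ f₂ hf₁ hf₂ => simp only [hmul_add_left, hf₁, hf₂]
  | hsingle wf cf =>
    induction g using H_induction_linear with
    | h0 => simp [hmul_zero_left, hmul_zero_right]
    | hadd g₁ g₂ hg₁ hg₂ => simp only [hmul_add_left, hmul_add_right, hg₁, hg₂]
    | hsingle wg cg =>
      induction h using H_induction_linear with
      | h0 => simp [hmul_zero_right]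
      | hadd h₁ h₂ hh₁ hh₂ => simp only [hmul_add_right, hh₁, hh₂]
      | hsingle wh ch =>
        rw [single_eq_smul_wrd wf, single_eq_smul_wrd wg, single_eq_smul_wrd wh]
        simp only [hmul_smul_left, hmul_smul_right]
        rw [hmul_wrd_assoc_aux ((FreeMonoid.toList wf).length + (FreeMonoid.toList wg).length
          + (FreeMonoid.toList wh).length) _ _ _ le_rfl]

end Assoc

section Comm

lemma har_comm_aux :
    ∀ (n : ℕ) (u v : List M), u.length + v.length ≤ n →
      (∀ a ∈ u, ∀ b ∈ v, a * b = b * a) → har u v = har v u := by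
  intro n
  induction n with
  | zero =>
      intro u v h _
      have hu : u = [] := by cases u <;> simp_all
      have hv : v = [] := by cases v <;> simp_all
      subst hu; subst hv; rfl
  | succ n ih =>
      intro u v h hc
      match u, v with
      | [], v => rw [har_nil_left, har_nil_right]
      | u, [] => rw [har_nil_left, har_nil_right]
      | a :: u, b :: v =>
        simp only [List.length_cons] at h
        have h1 : har u (b :: v) = har (b :: v) u :=
          ih u (b :: v) (by simp; omega)
            (fun x hx y hy => hc x (List.mem_cons_of_mem a hx) y hy)
        have h2 : har (a :: u) v = har v (a :: u) :=
          ih (a :: u) v (by simp; omega)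
            (fun x hx y hy => hc x hx y (List.mem_cons_of_mem b hy))
        have h3 : har u v = har v u :=
          ih u v (by omega)
            (fun x hx y hy => hc x (List.mem_cons_of_mem a hx) y (List.mem_cons_of_mem b hy))
        rw [har_cons_cons, har_cons_cons, h1, h2, h3,
          hc a List.mem_cons_self b List.mem_cons_self,
          add_comm (har (b :: v) u) (har v (a :: u))]

lemma hmul_wrd_comm (u v : List M) (hc : ∀ a ∈ u, ∀ b ∈ v, a * b = b * a) :
    hmul (wrd u) (wrd v) = hmul (wrd v) (wrd u) := by
  rw [hmul_wrd, hmul_wrd, har_comm_aux (u.length + v.length) u v le_rfl hc]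

end Comm


section HTRing

/-- Type synonym carrying the harmonic product as ring multiplication. -/
def HT (M : Type*) [MonoidWithZero M] : Type _ := H M

noncomputable instance : AddCommGroup (HT M) := inferInstanceAs (AddCommGroup (H M))
noncomputable instance : Module ℚ (HT M) := inferInstanceAs (Module ℚ (H M))

noncomputable instance : Ring (HT M) :=
  { (inferInstance : AddCommGroup (HT M)) with
    mul := fun x y => hmul x y
    left_distrib := fun a b c => hmul_add_right a b c
    right_distrib := fun a b c => hmul_add_left a b c
    zero_mul := fun a => hmul_zero_left a
    mul_zero := fun a => hmul_zero_right a
    mul_assoc := fun a b c => hmul_assoc a b c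
    one := (1 : H M)
    one_mul := fun a => one_hmul a
    mul_one := fun a => hmul_one a }

lemma HT_mul_def (x y : HT M) : x * y = hmul x y := rfl
lemma HT_smul_mul (c : ℚ) (x y : HT M) : (c • x) * y = c • (x * y) := hmul_smul_left c x y
lemma HT_mul_smul (c : ℚ) (x y : HT M) : x * (c • y) = c • (x * y) := hmul_smul_right c x y

/-- The generating power series of a coefficient sequence, in `(HT M)⟦X⟧`. -/
noncomputable def mkH (f : ℕ → H M) : PowerSeries (HT M) := PowerSeries.mk (R := HT M) f

lemma coeff_mkH (f : ℕ → H M) (n : ℕ) : PowerSeries.coeff (R := HT M) n (mkH f) = f n :=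
  PowerSeries.coeff_mk n f

lemma hmulPS_eq_coeff_mul (f g : ℕ → H M) (n : ℕ) :
    hmulPS f g n = PowerSeries.coeff (R := HT M) n (mkH f * mkH g) := by
  rw [PowerSeries.coeff_mul, Finset.Nat.sum_antidiagonal_eq_sum_range_succ_mk]
  unfold hmulPS
  apply Finset.sum_congr rfl
  intro i _
  rw [coeff_mkH, coeff_mkH]
  rfl

lemma psPow_eq_coeff_pow (f : ℕ → H M) (m n : ℕ) :
    psPow f m n = PowerSeries.coeff (R := HT M) n (mkH f ^ m) := by
  induction m generalizing n with
  | zero =>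
      rw [pow_zero, PowerSeries.coeff_one]
      rfl
  | succ m ihm =>
      rw [pow_succ', PowerSeries.coeff_mul, Finset.Nat.sum_antidiagonal_eq_sum_range_succ_mk]
      show hmulPS f (psPow f m) n = _
      unfold hmulPS
      apply Finset.sum_congr rfl
      intro i _
      rw [coeff_mkH, ihm]
      rfl

lemma expPS_eq (f : ℕ → H M) (n : ℕ) :
    expPS f n = ∑ m ∈ Finset.range (n + 1), ((Nat.factorial m : ℚ))⁻¹ •
      PowerSeries.coeff (R := HT M) n (mkH f ^ m) := by
  unfold expPS
  refine Finset.sum_congr rfl fun m _ => ?_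
  rw [psPow_eq_coeff_pow]
  rfl

lemma coeff_pow_eq_zero {F : PowerSeries (HT M)}
    (hF : PowerSeries.constantCoeff (R := HT M) F = 0)
    {p j : ℕ} (hj : j < p) : PowerSeries.coeff (R := HT M) j (F ^ p) = 0 := by
  induction p generalizing j with
  | zero => omega
  | succ p ihp =>
      rw [pow_succ', PowerSeries.coeff_mul, Finset.Nat.sum_antidiagonal_eq_sum_range_succ_mk]
      apply Finset.sum_eq_zero
      intro i hi
      have hi' := Finset.mem_range.mp hi
      rcases Nat.eq_zero_or_pos i with h0 | h0
      · subst h0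
        rw [PowerSeries.coeff_zero_eq_constantCoeff_apply, hF, zero_mul]
      · rw [ihp (by omega : j - i < p), mul_zero]

lemma coeff_pow_mul_eq_zero {F G : PowerSeries (HT M)}
    (hF : PowerSeries.constantCoeff (R := HT M) F = 0)
    (hG : PowerSeries.constantCoeff (R := HT M) G = 0)
    {n p q : ℕ} (h : n < p + q) :
    PowerSeries.coeff (R := HT M) n (F ^ p * G ^ q) = 0 := by
  rw [PowerSeries.coeff_mul, Finset.Nat.sum_antidiagonal_eq_sum_range_succ_mk]
  apply Finset.sum_eq_zero
  intro i hi
  have hi' := Finset.mem_range.mp hi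
  by_cases hip : i < p
  · rw [coeff_pow_eq_zero hF hip, zero_mul]
  · rw [coeff_pow_eq_zero hG (by omega : n - i < q), mul_zero]

lemma sum_triangle {α : Type*} [AddCommMonoid α] (N : ℕ) (h : ℕ → ℕ → α) :
    ∑ m ∈ Finset.range N, ∑ p ∈ Finset.range (m + 1), h p (m - p)
      = ∑ p ∈ Finset.range N, ∑ q ∈ Finset.range (N - p), h p q := by
  induction N with
  | zero => simp
  | succ N ihN =>
      rw [Finset.sum_range_succ, ihN,
        Finset.sum_range_succ (fun p => ∑ q ∈ Finset.range (N + 1 - p), h p q) N,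
        Finset.sum_range_succ (fun p => h p (N - p)) N]
      have step : ∀ p ∈ Finset.range N,
          (∑ q ∈ Finset.range (N + 1 - p), h p q)
            = (∑ q ∈ Finset.range (N - p), h p q) + h p (N - p) := by
        intro p hp
        have hpN := Finset.mem_range.mp hp
        rw [(by omega : N + 1 - p = (N - p) + 1), Finset.sum_range_succ]
      rw [Finset.sum_congr rfl step, Finset.sum_add_distrib,
        (by omega : N + 1 - N = 1), Finset.sum_range_one, Nat.sub_self]
      abel

lemma fact_fact_inv (m p : ℕ) (hp : p ≤ m) :
    (Nat.factorial m : ℚ)⁻¹ * (Nat.choose m p : ℚ) =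
      (Nat.factorial p : ℚ)⁻¹ * (Nat.factorial (m - p) : ℚ)⁻¹ := by
  have key : (Nat.choose m p * Nat.factorial p * Nat.factorial (m - p) : ℕ) = Nat.factorial m :=
    Nat.choose_mul_factorial_mul_factorial hp
  have key' : ((Nat.choose m p : ℚ)) * (Nat.factorial p : ℚ) * (Nat.factorial (m - p) : ℚ)
      = (Nat.factorial m : ℚ) := by exact_mod_cast congrArg (Nat.cast : ℕ → ℚ) key
  have h1 : (Nat.factorial m : ℚ) ≠ 0 := Nat.cast_ne_zero.mpr (Nat.factorial_ne_zero m)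
  have h2 : (Nat.factorial p : ℚ) ≠ 0 := Nat.cast_ne_zero.mpr (Nat.factorial_ne_zero p)
  have h3 : (Nat.factorial (m - p) : ℚ) ≠ 0 := Nat.cast_ne_zero.mpr (Nat.factorial_ne_zero _)
  field_simp
  linear_combination key'

end HTRing


section ExpAdd

lemma expPS_add_eq (f g : ℕ → H M) (hf : f 0 = 0) (hg : g 0 = 0)
    (hcomm : ∀ i j, hmul (f i) (g j) = hmul (g j) (f i)) (n : ℕ) :
    expPS (fun k => f k + g k) n = hmulPS (expPS f) (expPS g) n := by
  classical
  set F : PowerSeries (HT M) := mkH f with hF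
  set G : PowerSeries (HT M) := mkH g with hG
  have hFG : mkH (fun k => f k + g k) = F + G := by
    apply PowerSeries.ext
    intro k
    rw [map_add, hF, hG, coeff_mkH, coeff_mkH, coeff_mkH]
    rfl
  have hcF : PowerSeries.constantCoeff (R := HT M) F = 0 := by
    rw [hF]
    show PowerSeries.constantCoeff (R := HT M) (PowerSeries.mk (R := HT M) f) = 0
    show f 0 = 0
    exact hf
  have hcG : PowerSeries.constantCoeff (R := HT M) G = 0 := by
    rw [hG]
    show PowerSeries.constantCoeff (R := HT M) (PowerSeries.mk (R := HT M) g) = 0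
    show g 0 = 0
    exact hg
  have hCom : Commute F G := by
    show F * G = G * F
    apply PowerSeries.ext
    intro k
    rw [PowerSeries.coeff_mul, PowerSeries.coeff_mul,
      Finset.Nat.sum_antidiagonal_eq_sum_range_succ_mk,
      Finset.Nat.sum_antidiagonal_eq_sum_range_succ_mk,
      ← Finset.sum_range_reflect
        (fun i => PowerSeries.coeff (R := HT M) i F * PowerSeries.coeff (R := HT M) (k - i) G) (k + 1)]
    apply Finset.sum_congr rfl
    intro j hj
    have hj' : j ≤ k := by have := Finset.mem_range.mp hj; omega
    simp only [Nat.add_sub_cancel]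
    rw [Nat.sub_sub_self hj', hF, hG, coeff_mkH, coeff_mkH]
    exact hcomm (k - j) j
  -- left-hand side
  have keyL : expPS (fun k => f k + g k) n
      = ∑ m ∈ Finset.range (n + 1), ∑ p ∈ Finset.range (m + 1),
          (((Nat.factorial p : ℚ))⁻¹ * ((Nat.factorial (m - p) : ℚ))⁻¹) •
            PowerSeries.coeff (R := HT M) n (F ^ p * G ^ (m - p)) := by
    rw [expPS_eq, hFG]
    apply Finset.sum_congr rfl
    intro m _
    rw [hCom.add_pow m, map_sum, Finset.smul_sum]
    apply Finset.sum_congr rfl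
    intro p hp
    have hpm : p ≤ m := by have := Finset.mem_range.mp hp; omega
    have hcast : F ^ p * G ^ (m - p) * ((Nat.choose m p : ℕ) : PowerSeries (HT M))
        = (Nat.choose m p) • (F ^ p * G ^ (m - p)) := by
      rw [(Nat.cast_commute (Nat.choose m p) (F ^ p * G ^ (m - p))).symm.eq, ← nsmul_eq_mul]
    rw [hcast, map_nsmul, ← Nat.cast_smul_eq_nsmul ℚ, smul_smul, fact_fact_inv m p hpm]
  -- right-hand side
  have keyR : hmulPS (expPS f) (expPS g) n
      = ∑ p ∈ Finset.range (n + 1), ∑ q ∈ Finset.range (n + 1),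
          (((Nat.factorial p : ℚ))⁻¹ * ((Nat.factorial q : ℚ))⁻¹) •
            PowerSeries.coeff (R := HT M) n (F ^ p * G ^ q) := by
    rw [hmulPS_eq_coeff_mul, PowerSeries.coeff_mul,
      Finset.Nat.sum_antidiagonal_eq_sum_range_succ_mk]
    have stepi : ∀ i ∈ Finset.range (n + 1),
        PowerSeries.coeff (R := HT M) i (mkH (expPS f)) *
            PowerSeries.coeff (R := HT M) (n - i) (mkH (expPS g))
          = ∑ p ∈ Finset.range (n + 1), ∑ q ∈ Finset.range (n + 1),
              (((Nat.factorial p : ℚ))⁻¹ * ((Nat.factorial q : ℚ))⁻¹) •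
                (PowerSeries.coeff (R := HT M) i (F ^ p) *
                  PowerSeries.coeff (R := HT M) (n - i) (G ^ q)) := by
      intro i hi
      have hi' := Finset.mem_range.mp hi
      have ef : PowerSeries.coeff (R := HT M) i (mkH (expPS f))
          = ∑ p ∈ Finset.range (n + 1),
              ((Nat.factorial p : ℚ))⁻¹ • PowerSeries.coeff (R := HT M) i (F ^ p) := by
        rw [coeff_mkH, expPS_eq]
        apply Finset.sum_subset (Finset.range_subset_range.mpr (by omega : i + 1 ≤ n + 1))
        intro p hp hp'
        have h1 := Finset.mem_range.mp hp
        have h2 : ¬ p < i + 1 := fun hc => hp' (Finset.mem_range.mpr hc)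
        rw [coeff_pow_eq_zero hcF (by omega : i < p), smul_zero]
      have eg : PowerSeries.coeff (R := HT M) (n - i) (mkH (expPS g))
          = ∑ q ∈ Finset.range (n + 1),
              ((Nat.factorial q : ℚ))⁻¹ • PowerSeries.coeff (R := HT M) (n - i) (G ^ q) := by
        rw [coeff_mkH, expPS_eq]
        apply Finset.sum_subset (Finset.range_subset_range.mpr (by omega : n - i + 1 ≤ n + 1))
        intro q hq hq'
        have h1 := Finset.mem_range.mp hq
        have h2 : ¬ q < n - i + 1 := fun hc => hq' (Finset.mem_range.mpr hc)
        rw [coeff_pow_eq_zero hcG (by omega : n - i < q), smul_zero]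
      rw [ef, eg, Finset.sum_mul_sum]
      apply Finset.sum_congr rfl
      intro p _
      apply Finset.sum_congr rfl
      intro q _
      rw [HT_smul_mul, HT_mul_smul, smul_smul]
    rw [Finset.sum_congr rfl stepi]
    rw [Finset.sum_comm]
    apply Finset.sum_congr rfl
    intro p _
    rw [Finset.sum_comm]
    apply Finset.sum_congr rfl
    intro q _
    rw [← Finset.smul_sum]
    congr 1
    rw [PowerSeries.coeff_mul, Finset.Nat.sum_antidiagonal_eq_sum_range_succ_mk]
  rw [keyL, keyR,
    sum_triangle (n + 1) (fun p q => (((Nat.factorial p : ℚ))⁻¹ * ((Nat.factorial q : ℚ))⁻¹) •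
      PowerSeries.coeff (R := HT M) n (F ^ p * G ^ q))]
  apply Finset.sum_congr rfl
  intro p hp
  have hpn := Finset.mem_range.mp hp
  apply Finset.sum_subset (Finset.range_subset_range.mpr (by omega : n + 1 - p ≤ n + 1))
  intro q hq hq'
  have h1 := Finset.mem_range.mp hq
  have h2 : ¬ q < n + 1 - p := fun hc => hq' (Finset.mem_range.mpr hc)
  rw [coeff_pow_mul_eq_zero hcF hcG (by omega : n < p + q), smul_zero]
  rfl

end ExpAdd


section Final

lemma psPow_twist (c : ℚ) (f : ℕ → H M) (m n : ℕ) :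
    psPow (fun d => c ^ d • f d) m n = c ^ n • psPow f m n := by
  induction m generalizing n with
  | zero =>
      show (if n = 0 then (1 : H M) else 0) = c ^ n • (if n = 0 then (1 : H M) else 0)
      split_ifs with h
      · subst h; simp
      · simp
  | succ m ih =>
      show hmulPS _ (psPow _ m) n = c ^ n • hmulPS f (psPow f m) n
      unfold hmulPS
      rw [Finset.smul_sum]
      apply Finset.sum_congr rfl
      intro i hi
      have hi' : i ≤ n := by have := Finset.mem_range.mp hi; omega
      rw [ih, hmul_smul_left, hmul_smul_right, smul_smul, ← pow_add,
        Nat.add_sub_cancel' hi']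

lemma expPS_twist (c : ℚ) (f : ℕ → H M) (n : ℕ) :
    expPS (fun d => c ^ d • f d) n = c ^ n • expPS f n := by
  unfold expPS
  rw [Finset.smul_sum]
  apply Finset.sum_congr rfl
  intro m _
  rw [psPow_twist, smul_comm]

lemma wrd_replicate_zero (m : ℕ) : wrd [(0 : M)] ^ m = wrd (List.replicate m (0 : M)) := by
  induction m with
  | zero => rw [pow_zero, List.replicate_zero, wrd_nil]
  | succ m ih => rw [pow_succ', ih, ← wrd_cons, ← List.replicate_succ]

lemma s_eq_wrd (z : M) (k : ℕ) : s z k = wrd (z :: List.replicate (k - 1) (0 : M)) := by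
  unfold s e
  rw [wrd_replicate_zero, ← wrd_cons]

lemma hmul_s_comm (z : M) (i j ki kj : ℕ) :
    hmul (s (z ^ i) ki) (s (z ^ j) kj) = hmul (s (z ^ j) kj) (s (z ^ i) ki) := by
  rw [s_eq_wrd, s_eq_wrd]
  apply hmul_wrd_comm
  intro a ha b hb
  rcases List.mem_cons.mp ha with ha | ha
  · rcases List.mem_cons.mp hb with hb | hb
    · subst ha; subst hb; exact (Commute.pow_pow_self z i j).eq
    · have hb0 : b = 0 := (List.eq_of_mem_replicate hb)
      subst ha; subst hb0; rw [mul_zero, zero_mul]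
  · have ha0 : a = 0 := (List.eq_of_mem_replicate ha)
    subst ha0; rw [mul_zero, zero_mul]

lemma gexp_comm (z : M) (i j : ℕ) :
    hmul (gexp z 1 i) (((-1 : ℚ)) ^ j • gexp z 1 j)
      = hmul (((-1 : ℚ)) ^ j • gexp z 1 j) (gexp z 1 i) := by
  rw [hmul_smul_right, hmul_smul_left]
  congr 1
  unfold gexp
  split_ifs with h1 h2 h2
  · rw [hmul_smul_left, hmul_smul_right, hmul_smul_left, hmul_smul_right,
      hmul_s_comm z (i / 1) (j / 1) i j]
    exact smul_comm _ _ _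
  · rw [hmul_zero_right, hmul_zero_left]
  · rw [hmul_zero_left, hmul_zero_right]
  · rw [hmul_zero_left]

lemma gexp_zero_eq (z : M) : gexp z 1 0 = 0 := by simp [gexp]

lemma gexp_two (z : M) (d : ℕ) :
    gexp (z ^ 2) 2 d = gexp z 1 d + ((-1 : ℚ)) ^ d • gexp z 1 d := by
  unfold gexp
  by_cases h0 : d = 0
  · subst h0; simp
  · by_cases h2 : 2 ∣ d
    · rw [if_pos ⟨h0, h2⟩, if_pos ⟨h0, one_dvd d⟩]
      have hd2 : (z ^ 2) ^ (d / 2) = z ^ (d / 1) := by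
        rw [← pow_mul, Nat.mul_div_cancel' h2, Nat.div_one]
      rw [hd2]
      have heven : ((-1 : ℚ)) ^ d = 1 := Even.neg_one_pow (by obtain ⟨k, hk⟩ := h2; exact ⟨k, by omega⟩)
      rw [heven, one_smul, ← add_smul]
      congr 1
      obtain ⟨k, hk⟩ := h2
      have hk0 : k ≠ 0 := by rintro rfl; omega
      subst hk
      rw [Nat.div_one, Nat.mul_div_cancel_left k (by norm_num)]
      have hkQ : (k : ℚ) ≠ 0 := Nat.cast_ne_zero.mpr hk0
      push_cast
      field_simp
      norm_num
    · rw [if_neg (fun hc => h2 hc.2), if_pos ⟨h0, one_dvd d⟩]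
      have hodd : ((-1 : ℚ)) ^ d = -1 := Odd.neg_one_pow (Nat.odd_iff.mpr (Nat.two_dvd_ne_zero.mp h2))
      rw [hodd, neg_one_smul, add_neg_cancel]

lemma SRcoef_one (z : M) (n : ℕ) : SRcoef z 1 n = expPS (gexp z 1) n := by
  unfold SRcoef
  rw [if_pos (by omega : 1 - 1 ≤ n)]
  norm_num

end Final

/-- `S^R_{z²,2}(x) = x · (S^R_{z,1}(x) ∗ S^R_{z,1}(−x))` in `𝔥_{M,∗}⟦x⟧`. -/
theorem SR_square (M : Type*) [MonoidWithZero M] (z : M) (d : ℕ) :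
    SRcoef (z ^ 2) 2 d =
      if d = 0 then 0
      else hmulPS (SRcoef z 1) (fun n => ((-1 : ℚ)) ^ n • SRcoef z 1 n) (d - 1) := by
  by_cases h0 : d = 0
  · subst h0
    rw [if_pos rfl]
    unfold SRcoef
    rw [if_neg (by omega)]
  · rw [if_neg h0]
    have hL : SRcoef (z ^ 2) 2 d = expPS (gexp (z ^ 2) 2) (d - 1) := by
      unfold SRcoef
      rw [if_pos (by omega : 2 - 1 ≤ d)]
    rw [hL]
    have hright : (fun n => ((-1 : ℚ)) ^ n • SRcoef z 1 n)
        = expPS (fun k => ((-1 : ℚ)) ^ k • gexp z 1 k) := by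
      funext n
      rw [SRcoef_one]
      exact (expPS_twist (-1 : ℚ) (gexp z 1) n).symm
    have hleft2 : SRcoef z 1 = expPS (gexp z 1) := funext (SRcoef_one z)
    rw [hright, hleft2]
    have hgexp : gexp (z ^ 2) 2 = (fun k => gexp z 1 k + ((-1 : ℚ)) ^ k • gexp z 1 k) :=
      funext (gexp_two z)
    rw [hgexp]
    exact expPS_add_eq (gexp z 1) (fun k => ((-1 : ℚ)) ^ k • gexp z 1 k)
      (gexp_zero_eq z) (by simp [gexp_zero_eq]) (gexp_comm z) (d - 1)
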